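/- In the independent-set reduction DSP instance, for any set S of mediators, letting S' = {m_{v,k} ∈ S : no neighbor u of v has a mediator m_{u,k'} ∈ S}, the joint-partition revenue satisfies R(×_{m_{v,k}∈S} P_{v,k}) ≤ |S'| + N + 1. -/

import Mathlib

open Finset

/-- The second-highest value of `f` over a finite type (0 if fewer than two indices),
computed as the maximum over pairs of distinct indices of the minimum of the two values. -/
noncomputable def secondMax {B : Type*} [Fintype B] [DecidableEq B] (f : B → ℝ) : ℝ :=
  ((Finset.univ ×ˢ Finset.univ).filter (fun p : B × B => p.1 ≠ p.2)).fold max 0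
    (fun p => min (f p.1) (f p.2))

/-- The contribution `μ(S)·v(S)` of a part `S`: the second-highest, over bidders `i`,
of `Σ_{j∈S} μ j · vals i j`. -/
noncomputable def partVal {I B : Type*} [Fintype B] [DecidableEq B]
    (μ : I → ℝ) (vals : B → I → ℝ) (S : Finset I) : ℝ :=
  secondMax (fun i => ∑ j ∈ S, μ j * vals i j)

/-- The revenue of a collection of parts. -/
noncomputable def revenue {I B : Type*} [Fintype B] [DecidableEq B]
    (μ : I → ℝ) (vals : B → I → ℝ) (P : Finset (Finset I)) : ℝ :=
  ∑ S ∈ P, partVal μ vals S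

/-- `P` is a partition of the whole item set. -/
def IsPartition {I : Type*} (P : Finset (Finset I)) : Prop :=
  (∀ j : I, ∃ S ∈ P, j ∈ S) ∧
  (∀ S ∈ P, ∀ T ∈ P, S ≠ T → Disjoint S T) ∧
  (∅ : Finset I) ∉ P

/-- Items of the reduction instance: `Sum.inl (v,k)` is the non-helper item `j_{v,k}`,
`Sum.inr (v,k)` is the helper item `j'_{v,k}`. -/
abbrev RItem (V : Type*) (ℓ : ℕ) := (V × Fin ℓ) ⊕ (V × Fin ℓ)

/-- Bidders of the reduction instance: `Sum.inl (v,k)` is the single-minded bidder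
`i_{v,k}`, and `Sum.inr ()` is the helper bidder `i_h`. -/
abbrev RBidder (V : Type*) (ℓ : ℕ) := (V × Fin ℓ) ⊕ Unit

/-- The uniform prior on the `2ℓN` items. -/
noncomputable def redμ (V : Type*) [Fintype V] (ℓ : ℕ) : RItem V ℓ → ℝ :=
  fun _ => 1 / (2 * ℓ * Fintype.card V : ℝ)

/-- Valuations of the reduction instance: `i_{v,k}` values `j_{v,k}` at `2ℓN`, and
`i_h` values each helper item at `2ℓN`. -/
def redVals (V : Type*) [Fintype V] [DecidableEq V] (ℓ : ℕ) :
    RBidder V ℓ → RItem V ℓ → ℝ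
  | Sum.inl p, Sum.inl q => if p = q then (2 * ℓ * Fintype.card V : ℝ) else 0
  | Sum.inl _, Sum.inr _ => 0
  | Sum.inr _, Sum.inl _ => 0
  | Sum.inr _, Sum.inr _ => (2 * ℓ * Fintype.card V : ℝ)

/-- The informative part of mediator `m_{v,k}`'s binary partition:
`{j_{v,k}, j'_{v,k}} ∪ ⋃_{u : uv ∈ E} H_u`. -/
def medPart {V : Type*} [Fintype V] [DecidableEq V] {ℓ : ℕ}
    (G : SimpleGraph V) [DecidableRel G.Adj] (v : V) (k : Fin ℓ) :
    Finset (RItem V ℓ) :=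
  Finset.univ.filter (fun x =>
    x = Sum.inl (v, k) ∨ x = Sum.inr (v, k) ∨
    ∃ u : V, ∃ k' : Fin ℓ, G.Adj u v ∧ x = Sum.inr (u, k'))

/-- The joint partition induced by the set `S` of speaking mediators: two items are in
the same part iff they are not separated by any mediator of `S`. -/
def jointOf {V : Type*} [Fintype V] [DecidableEq V] {ℓ : ℕ}
    (G : SimpleGraph V) [DecidableRel G.Adj] (S : Finset (V × Fin ℓ)) :
    Finset (Finset (RItem V ℓ)) :=
  Finset.univ.image (fun x : RItem V ℓ =>
    Finset.univ.filter (fun y =>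
      ∀ p ∈ S, (y ∈ medPart G p.1 p.2 ↔ x ∈ medPart G p.1 p.2)))


section AuxRed

variable {V : Type*} [Fintype V] [DecidableEq V] {ℓ : ℕ}
  (G : SimpleGraph V) [DecidableRel G.Adj] (S : Finset (V × Fin ℓ))

/-- The signature of an item: the mediators of `S` whose informative part contains it. -/
def sigOf (x : RItem V ℓ) : Finset (V × Fin ℓ) :=
  S.filter (fun p => x ∈ medPart G p.1 p.2)

/-- The joint-partition class of an item. -/
def classOf (x : RItem V ℓ) : Finset (RItem V ℓ) :=
  Finset.univ.filter (fun y =>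
    ∀ p ∈ S, (y ∈ medPart G p.1 p.2 ↔ x ∈ medPart G p.1 p.2))

lemma jointOf_eq : jointOf G S = Finset.univ.image (classOf G S) := rfl

lemma mem_classOf {x y : RItem V ℓ} :
    y ∈ classOf G S x ↔ sigOf G S y = sigOf G S x := by
  simp only [classOf, Finset.mem_filter, Finset.mem_univ, true_and, sigOf]
  constructor
  · intro h
    ext p
    simp only [Finset.mem_filter]
    constructor
    · rintro ⟨hp, hmem⟩; exact ⟨hp, (h p hp).mp hmem⟩
    · rintro ⟨hp, hmem⟩; exact ⟨hp, (h p hp).mpr hmem⟩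
  · intro h p hp
    have := Finset.ext_iff.mp h p
    simp only [Finset.mem_filter, hp, true_and] at this
    exact this

lemma mem_classOf_self (x : RItem V ℓ) : x ∈ classOf G S x :=
  (mem_classOf G S).mpr rfl

lemma mem_medPart_inl {q : V × Fin ℓ} {v : V} {k : Fin ℓ} :
    (Sum.inl q : RItem V ℓ) ∈ medPart G v k ↔ q = (v, k) := by
  simp [medPart]

lemma mem_medPart_inr {q : V × Fin ℓ} {v : V} {k : Fin ℓ} :
    (Sum.inr q : RItem V ℓ) ∈ medPart G v k ↔ q = (v, k) ∨ G.Adj q.1 v := by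
  simp only [medPart, Finset.mem_filter, Finset.mem_univ, true_and]
  constructor
  · rintro (h | h | ⟨u, k', ha, h⟩)
    · exact absurd h (by simp)
    · exact Or.inl (Sum.inr.inj h)
    · have : q = (u, k') := Sum.inr.inj h
      subst this
      exact Or.inr ha
  · rintro (rfl | h)
    · exact Or.inr (Or.inl rfl)
    · exact Or.inr (Or.inr ⟨q.1, q.2, h, rfl⟩)

lemma sigOf_inl (p : V × Fin ℓ) :
    sigOf G S (Sum.inl p) = if p ∈ S then {p} else ∅ := by
  rw [← Finset.filter_eq]
  unfold sigOf
  apply Finset.filter_congr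
  intro q _
  simp [mem_medPart_inl, eq_comm]

lemma sigOf_inr (q : V × Fin ℓ) :
    sigOf G S (Sum.inr q) = S.filter (fun r => r = q ∨ G.Adj q.1 r.1) := by
  unfold sigOf
  apply Finset.filter_congr
  intro r _
  simp only [mem_medPart_inr]
  constructor
  · rintro (h | h)
    · exact Or.inl (by simp [h])
    · exact Or.inr h
  · rintro (rfl | h)
    · exact Or.inl rfl
    · exact Or.inr h

lemma secondMax_le_of {B : Type*} [Fintype B] [DecidableEq B] (f : B → ℝ) {c : ℝ}
    (hc : 0 ≤ c) (h : ∀ a b : B, a ≠ b → min (f a) (f b) ≤ c) : secondMax f ≤ c := by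
  rw [secondMax, Finset.fold_max_le]
  exact ⟨hc, fun p hp => h p.1 p.2 (Finset.mem_filter.mp hp).2⟩

lemma sum_inl_eq (hℓ : 1 ≤ ℓ) (hV : 1 ≤ Fintype.card V) (T : Finset (RItem V ℓ))
    (p : V × Fin ℓ) :
    (∑ j ∈ T, redμ V ℓ j * redVals V ℓ (Sum.inl p) j)
      = if Sum.inl p ∈ T then (1 : ℝ) else 0 := by
  have h1 : (1 : ℝ) ≤ (ℓ : ℝ) := by exact_mod_cast hℓ
  have h2 : (1 : ℝ) ≤ (Fintype.card V : ℝ) := by exact_mod_cast hV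
  have hc : (2 * ℓ * Fintype.card V : ℝ) ≠ 0 := by nlinarith
  rw [← Finset.sum_ite_eq' T (Sum.inl p) (fun _ => (1 : ℝ))]
  apply Finset.sum_congr rfl
  intro j _
  rcases j with q | q
  · simp only [redμ, redVals, Sum.inl.injEq]
    by_cases h : q = p
    · subst h; rw [if_pos rfl, if_pos rfl]; field_simp
    · rw [if_neg (fun hpq => h hpq.symm), if_neg h, mul_zero]
  · simp [redμ, redVals]

end AuxRed

/-- For any set `S` of speaking mediators, with `S'` the mediators of `S` whose node has
no neighbor with a mediator in `S`, the joint-partition revenue is at most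
`|S'| + N + 1`. -/
theorem red_revenue_upper_bound {V : Type*} [Fintype V] [DecidableEq V] {ℓ : ℕ}
    (hℓ : 1 ≤ ℓ) (hV : 1 ≤ Fintype.card V)
    (G : SimpleGraph V) [DecidableRel G.Adj] (S : Finset (V × Fin ℓ)) :
    revenue (redμ V ℓ) (redVals V ℓ) (jointOf G S) ≤
      ((S.filter (fun p => ∀ q ∈ S, ¬ G.Adj q.1 p.1)).card : ℝ) +
        (Fintype.card V : ℝ) + 1 := by
  classical
  have h1 : (1 : ℝ) ≤ (ℓ : ℝ) := by exact_mod_cast hℓ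
  have h2 : (1 : ℝ) ≤ (Fintype.card V : ℝ) := by exact_mod_cast hV
  set good : Finset (RItem V ℓ) → Prop :=
    fun T => (∃ p : V × Fin ℓ, Sum.inl p ∈ T) ∧ 2 ≤ T.card with hgood
  -- Step 1: each part contributes at most its goodness indicator.
  have hpart : ∀ T ∈ jointOf G S,
      partVal (redμ V ℓ) (redVals V ℓ) T ≤ if good T then 1 else 0 := by
    intro T _
    unfold partVal
    split_ifs with hg
    · apply secondMax_le_of _ zero_le_one
      intro a b hab
      have key : ∀ q : V × Fin ℓ,
          (∑ j ∈ T, redμ V ℓ j * redVals V ℓ (Sum.inl q) j) ≤ 1 := by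
        intro q; rw [sum_inl_eq hℓ hV]; split_ifs <;> norm_num
      rcases a with qa | ua
      · exact le_trans (min_le_left _ _) (key qa)
      · rcases b with qb | ub
        · exact le_trans (min_le_right _ _) (key qb)
        · cases ua; cases ub; exact absurd rfl hab
    · apply secondMax_le_of _ le_rfl
      intro a b hab
      simp only [hgood, not_and, not_le] at hg
      by_cases hex : ∃ p : V × Fin ℓ, Sum.inl p ∈ T
      · obtain ⟨p0, hp0⟩ := hex
        have hcard : T.card ≤ 1 := by have := hg ⟨p0, hp0⟩; omega
        have hT : T = {Sum.inl p0} := by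
          apply Finset.eq_singleton_iff_unique_mem.mpr
          exact ⟨hp0, fun y hy => Finset.card_le_one.mp hcard y hy (Sum.inl p0) hp0⟩
        have hzero : ∀ i : RBidder V ℓ, i ≠ Sum.inl p0 →
            (∑ j ∈ T, redμ V ℓ j * redVals V ℓ i j) = 0 := by
          intro i hi
          rcases i with q | u
          · rw [sum_inl_eq hℓ hV, if_neg]
            rw [hT]; simp only [Finset.mem_singleton, Sum.inl.injEq]
            intro h; exact hi (by rw [h])
          · rw [hT]; simp [redVals]
        by_cases ha : a = Sum.inl p0
        · have hb : b ≠ Sum.inl p0 := fun h => hab (by rw [ha, h])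
          exact le_trans (min_le_right _ _) (le_of_eq (hzero b hb))
        · exact le_trans (min_le_left _ _) (le_of_eq (hzero a ha))
      · push_neg at hex
        have hzero : ∀ q : V × Fin ℓ,
            (∑ j ∈ T, redμ V ℓ j * redVals V ℓ (Sum.inl q) j) = 0 := by
          intro q; rw [sum_inl_eq hℓ hV, if_neg (hex q)]
        rcases a with qa | ua
        · exact le_trans (min_le_left _ _) (le_of_eq (hzero qa))
        · rcases b with qb | ub
          · exact le_trans (min_le_right _ _) (le_of_eq (hzero qb))
          · cases ua; cases ub; exact absurd rfl hab
  -- Step 2: revenue is at most the number of good parts.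
  have hrev : revenue (redμ V ℓ) (redVals V ℓ) (jointOf G S)
      ≤ (((jointOf G S).filter good).card : ℝ) := by
    calc revenue (redμ V ℓ) (redVals V ℓ) (jointOf G S)
        ≤ ∑ T ∈ jointOf G S, (if good T then (1 : ℝ) else 0) :=
          Finset.sum_le_sum hpart
      _ = (((jointOf G S).filter good).card : ℝ) := by rw [Finset.sum_boole]
  -- Step 3: counting good parts.
  set A : Finset (V × Fin ℓ) :=
    S.filter (fun p => ∃ q : V × Fin ℓ, sigOf G S (Sum.inr q) = {p}) with hA
  set W : Finset (Finset (V × Fin ℓ)) :=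
    insert ∅ (A.image fun p => ({p} : Finset (V × Fin ℓ))) with hW
  set φ : Finset (RItem V ℓ) → Finset (V × Fin ℓ) :=
    fun T => if h : T.Nonempty then sigOf G S h.choose else ∅ with hφ
  -- each good part has all its elements of a common signature that lands in W
  have hsig_of_mem : ∀ (x : RItem V ℓ), ∀ y ∈ classOf G S x,
      sigOf G S y = sigOf G S x := fun x y hy => (mem_classOf G S).mp hy
  have hφ_eq : ∀ (x : RItem V ℓ), ∀ y ∈ classOf G S x,
      φ (classOf G S x) = sigOf G S y := by
    intro x y hy
    have hne : (classOf G S x).Nonempty := ⟨y, hy⟩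
    rw [hφ]
    simp only [dif_pos hne]
    rw [hsig_of_mem x _ hne.choose_spec, hsig_of_mem x y hy]
  have hmaps : ∀ T ∈ (jointOf G S).filter good, φ T ∈ W := by
    intro T hT
    rw [Finset.mem_filter] at hT
    obtain ⟨hTj, hTg⟩ := hT
    rw [jointOf_eq, Finset.mem_image] at hTj
    obtain ⟨x, -, hx⟩ := hTj
    obtain ⟨⟨p, hpT⟩, hcard⟩ := hTg
    have hpx : Sum.inl p ∈ classOf G S x := by rw [hx]; exact hpT
    have hφT : φ T = sigOf G S (Sum.inl p) := by
      rw [← hx]; exact hφ_eq x _ hpx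
    rw [hφT, sigOf_inl]
    by_cases hpS : p ∈ S
    · rw [if_pos hpS, hW]
      apply Finset.mem_insert_of_mem
      rw [Finset.mem_image]
      refine ⟨p, ?_, rfl⟩
      rw [hA, Finset.mem_filter]
      refine ⟨hpS, ?_⟩
      -- find a second element: it must be a helper item of signature {p}
      obtain ⟨y, hyT, hyne⟩ := Finset.exists_mem_ne (s := T) (by omega) (Sum.inl p)
      have hyx : y ∈ classOf G S x := by rw [hx]; exact hyT
      have hsy : sigOf G S y = {p} := by
        rw [hsig_of_mem x y hyx, ← hsig_of_mem x _ hpx, sigOf_inl, if_pos hpS]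
      rcases y with q | q
      · exfalso
        rw [sigOf_inl] at hsy
        by_cases hqS : q ∈ S
        · rw [if_pos hqS] at hsy
          exact hyne (by rw [Finset.singleton_inj.mp hsy])
        · rw [if_neg hqS] at hsy
          exact (Finset.singleton_ne_empty p) hsy.symm
      · exact ⟨q, hsy⟩
    · rw [if_neg hpS, hW]
      exact Finset.mem_insert_self _ _
  have hinj : Set.InjOn φ ((jointOf G S).filter good) := by
    intro T1 hT1 T2 hT2 heq
    simp only [Finset.coe_filter, Set.mem_setOf_eq] at hT1 hT2
    obtain ⟨x1, -, hx1⟩ := Finset.mem_image.mp ((jointOf_eq G S) ▸ hT1.1)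
    obtain ⟨x2, -, hx2⟩ := Finset.mem_image.mp ((jointOf_eq G S) ▸ hT2.1)
    have e1 : φ T1 = sigOf G S x1 := by
      rw [← hx1]; exact hφ_eq x1 x1 (mem_classOf_self G S x1)
    have e2 : φ T2 = sigOf G S x2 := by
      rw [← hx2]; exact hφ_eq x2 x2 (mem_classOf_self G S x2)
    have hs : sigOf G S x1 = sigOf G S x2 := by rw [← e1, ← e2, heq]
    rw [← hx1, ← hx2]
    ext z
    rw [mem_classOf, mem_classOf, hs]
  have hcount : ((jointOf G S).filter good).card ≤ W.card :=
    Finset.card_le_card_of_injOn φ hmaps hinj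
  have hWcard : W.card ≤ A.card + 1 := by
    rw [hW]
    calc (insert ∅ (A.image fun p => ({p} : Finset (V × Fin ℓ)))).card
        ≤ (A.image fun p => ({p} : Finset (V × Fin ℓ))).card + 1 :=
          Finset.card_insert_le _ _
      _ ≤ A.card + 1 := by gcongr; exact Finset.card_image_le
  -- Step 4: |A| ≤ |S'| + N
  set cond : V × Fin ℓ → Prop := fun p => ∀ q ∈ S, ¬ G.Adj q.1 p.1 with hcond
  have hsplit := Finset.card_filter_add_card_filter_not (s := A) cond
  have hA1 : (A.filter cond).card ≤ (S.filter cond).card :=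
    Finset.card_le_card (Finset.filter_subset_filter _ (Finset.filter_subset _ _))
  have hA2 : (A.filter (fun p => ¬ cond p)).card ≤ Fintype.card V := by
    have hne : Nonempty V := Fintype.card_pos_iff.mp (by omega)
    set fA : V × Fin ℓ → V := fun p =>
      if h : ∃ w : V, S.filter (fun q => G.Adj w q.1) = {p} then h.choose
      else Classical.choice hne with hfA
    have key : ∀ p ∈ A.filter (fun p => ¬ cond p),
        ∃ w : V, S.filter (fun q => G.Adj w q.1) = {p} := by
      intro p hp
      rw [Finset.mem_filter, hA, Finset.mem_filter] at hp
      obtain ⟨⟨hpS, q, hq⟩, hnc⟩ := hp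
      rw [sigOf_inr] at hq
      have hnc' : ∃ r ∈ S, G.Adj r.1 p.1 := by
        by_contra hno
        push_neg at hno
        exact hnc (by rw [hcond]; exact fun q hq => hno q hq)
      obtain ⟨r, hrS, hr⟩ := hnc' 
      by_cases hqp : q = p
      · exfalso
        subst hqp
        have hrin : r ∈ S.filter (fun s => s = q ∨ G.Adj q.1 s.1) :=
          Finset.mem_filter.mpr ⟨hrS, Or.inr (G.adj_symm hr)⟩
        rw [hq, Finset.mem_singleton] at hrin
        subst hrin
        exact G.irrefl hr
      · refine ⟨q.1, ?_⟩
        have hpin : p ∈ S.filter (fun s => s = q ∨ G.Adj q.1 s.1) := by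
          rw [hq]; exact Finset.mem_singleton_self p
        have hadj : G.Adj q.1 p.1 := by
          rcases (Finset.mem_filter.mp hpin).2 with h | h
          · exact absurd h.symm hqp
          · exact h
        apply Finset.Subset.antisymm
        · intro r' hr'
          rw [Finset.mem_filter] at hr'
          rw [← hq, Finset.mem_filter]
          exact ⟨hr'.1, Or.inr hr'.2⟩
        · rw [Finset.singleton_subset_iff, Finset.mem_filter]
          exact ⟨hpS, hadj⟩
    apply le_trans (Finset.card_le_card_of_injOn fA
      (fun p _ => Finset.mem_univ (fA p)) ?_) (le_of_eq (Finset.card_univ))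
    intro p1 hp1 p2 hp2 hfeq
    have k1 := key p1 hp1
    have k2 := key p2 hp2
    rw [hfA] at hfeq
    simp only [dif_pos k1, dif_pos k2] at hfeq
    have e1 := k1.choose_spec
    have e2 := k2.choose_spec
    rw [hfeq] at e1
    rw [e2] at e1
    exact Finset.singleton_inj.mp e1.symm
  -- assemble
  have hfinal : (((jointOf G S).filter good).card : ℝ) ≤
      ((S.filter cond).card : ℝ) + (Fintype.card V : ℝ) + 1 := by
    have : ((jointOf G S).filter good).card ≤
        (S.filter cond).card + Fintype.card V + 1 := by omega
    exact_mod_cast this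
  calc revenue (redμ V ℓ) (redVals V ℓ) (jointOf G S)
      ≤ (((jointOf G S).filter good).card : ℝ) := hrev
    _ ≤ ((S.filter cond).card : ℝ) + (Fintype.card V : ℝ) + 1 := hfinal
    _ = _ := by simp only [hcond, Finset.filter_congr_decidable]
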